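/- Every map q : H → ℂˣ of the form q(k) = ω^{k²} for ω a complex number with ω^{2n} = 1 (and ω^{n²}=1) is a well-defined quadratic form on H = ℤ/n, and conversely every quadratic form on ℤ/n is of this form. This establishes a bijection between quadratic forms on ℤ/n valued in ℂˣ and n-th roots of unity when n is odd, and 2n-th roots of unity when n is even. -/

import Mathlib

/-- The polarisation form of a map `q : H → ℂˣ`. -/
def polar {H : Type} [AddCommGroup H] (q : H → ℂˣ) (x y : H) : ℂˣ :=
  q (x + y) * (q x)⁻¹ * (q y)⁻¹

/-- A quadratic form on an abelian group `H`, valued in `ℂˣ`: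
`q(m·x) = q(x)^{m²}` and the polarisation form is bilinear. -/
def IsQuadForm {H : Type} [AddCommGroup H] (q : H → ℂˣ) : Prop :=
  (∀ (m : ℤ) (x : H), q (m • x) = q x ^ (m ^ 2)) ∧
  (∀ x y z : H, polar q (x + y) z = polar q x z * polar q y z) ∧
  (∀ x y z : H, polar q x (y + z) = polar q x y * polar q x z)

theorem keycong (n : ℕ) (ω : ℂˣ) (h2n : ω ^ (2 * n) = 1) (hn2 : ω ^ (n ^ 2) = 1)
    (a b : ℤ) (h : (a : ZMod n) = (b : ZMod n)) : ω ^ (a ^ 2) = ω ^ (b ^ 2) := by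
  obtain ⟨c, hc⟩ : (n : ℤ) ∣ a - b := ((ZMod.intCast_eq_intCast_iff _ _ _).mp h.symm).dvd
  have ha : a = b + n * c := by linarith
  have e1 : ω ^ ((2 * n : ℕ) : ℤ) = 1 := by rw [zpow_natCast, h2n]
  have e2 : ω ^ ((n ^ 2 : ℕ) : ℤ) = 1 := by rw [zpow_natCast, hn2]
  have : a ^ 2 = b ^ 2 + ((2 * n : ℕ) : ℤ) * (b * c) + ((n ^ 2 : ℕ) : ℤ) * c ^ 2 := by
    subst ha; push_cast; ring
  rw [this, zpow_add, zpow_add, zpow_mul ω ((2 * n : ℕ) : ℤ), zpow_mul ω ((n ^ 2 : ℕ) : ℤ),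
    e1, e2, one_zpow, one_zpow, mul_one, mul_one]

theorem keycong2 (n : ℕ) (ω : ℂˣ) (h2n : ω ^ (2 * n) = 1)
    (a a' b b' : ℤ) (ha : (a : ZMod n) = (a' : ZMod n)) (hb : (b : ZMod n) = (b' : ZMod n)) :
    ω ^ (2 * a * b) = ω ^ (2 * a' * b') := by
  obtain ⟨s, hs⟩ : (n : ℤ) ∣ a - a' := ((ZMod.intCast_eq_intCast_iff _ _ _).mp ha.symm).dvd
  obtain ⟨t, ht⟩ : (n : ℤ) ∣ b - b' := ((ZMod.intCast_eq_intCast_iff _ _ _).mp hb.symm).dvd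
  have e1 : ω ^ ((2 * n : ℕ) : ℤ) = 1 := by rw [zpow_natCast, h2n]
  have : 2 * a * b = 2 * a' * b' + ((2 * n : ℕ) : ℤ) * (a' * t + b' * s + n * s * t) := by
    have h1 : a = a' + n * s := by linarith
    have h2 : b = b' + n * t := by linarith
    subst h1 h2; push_cast; ring
  rw [this, zpow_add, zpow_mul ω ((2 * n : ℕ) : ℤ), e1, one_zpow, mul_one]

theorem valcast (n : ℕ) (hn : 0 < n) (x : ZMod n) : ((x.val : ℤ) : ZMod n) = x := by
  haveI : NeZero n := ⟨hn.ne'⟩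
  push_cast
  exact (ZMod.natCast_val x).trans (ZMod.cast_id _ _)

theorem L3 (n : ℕ) (hn : 0 < n) (ω : ℂˣ) (h2n : ω ^ (2 * n) = 1) (hn2 : ω ^ (n ^ 2) = 1)
    (k : ℤ) : ω ^ ((k : ZMod n).val ^ 2) = ω ^ (k ^ 2) := by
  rw [← zpow_natCast,
    ← keycong n ω h2n hn2 (((k : ZMod n).val : ℤ)) k (by rw [valcast n hn])]
  norm_cast

theorem L4 (n : ℕ) (hn : 0 < n) (ω : ℂˣ) (h2n : ω ^ (2 * n) = 1) (hn2 : ω ^ (n ^ 2) = 1)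
    (x y : ZMod n) :
    polar (fun x : ZMod n => ω ^ (x.val ^ 2)) x y = ω ^ (2 * (x.val : ℤ) * (y.val : ℤ)) := by
  have hcong : (((x + y : ZMod n).val : ℤ) : ZMod n)
      = (((x.val : ℤ) + (y.val : ℤ) : ℤ) : ZMod n) := by
    rw [valcast n hn, Int.cast_add, valcast n hn, valcast n hn]
  show ω ^ ((x + y : ZMod n).val ^ 2) * (ω ^ (x.val ^ 2))⁻¹ * (ω ^ (y.val ^ 2))⁻¹ = _
  rw [← zpow_natCast ω ((x + y : ZMod n).val ^ 2), ← zpow_natCast ω (x.val ^ 2),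
    ← zpow_natCast ω (y.val ^ 2)]
  push_cast
  rw [keycong n ω h2n hn2 _ _ hcong, ← zpow_neg, ← zpow_neg, ← zpow_add, ← zpow_add]
  congr 1
  ring

theorem fwdQuad (n : ℕ) (hn : 0 < n) (ω : ℂˣ) (h2n : ω ^ (2 * n) = 1)
    (hn2 : ω ^ (n ^ 2) = 1) :
    IsQuadForm (fun x : ZMod n => ω ^ (x.val ^ 2)) := by
  refine ⟨?_, ?_, ?_⟩
  · intro m x
    have hcong : (((m • x : ZMod n).val : ℤ) : ZMod n)
        = ((m * (x.val : ℤ) : ℤ) : ZMod n) := by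
      have hmul : ((m * (x.val : ℤ) : ℤ) : ZMod n) = (m : ZMod n) * ((x.val : ℤ) : ZMod n) := by
        push_cast; ring
      rw [valcast n hn, hmul, valcast n hn, zsmul_eq_mul]
    show ω ^ ((m • x : ZMod n).val ^ 2) = (ω ^ (x.val ^ 2)) ^ (m ^ 2)
    rw [← zpow_natCast ω ((m • x : ZMod n).val ^ 2), ← zpow_natCast ω (x.val ^ 2),
      ← zpow_mul]
    push_cast
    rw [keycong n ω h2n hn2 _ _ hcong]
    congr 1
    ring
  · intro x y z
    rw [L4 n hn ω h2n hn2, L4 n hn ω h2n hn2, L4 n hn ω h2n hn2]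
    have hcong : (((x + y : ZMod n).val : ℤ) : ZMod n)
        = (((x.val : ℤ) + (y.val : ℤ) : ℤ) : ZMod n) := by
      rw [valcast n hn, Int.cast_add, valcast n hn, valcast n hn]
    rw [keycong2 n ω h2n _ ((x.val : ℤ) + (y.val : ℤ)) ((z.val : ℤ)) ((z.val : ℤ)) hcong rfl,
      ← zpow_add]
    congr 1
    ring
  · intro x y z
    rw [L4 n hn ω h2n hn2, L4 n hn ω h2n hn2, L4 n hn ω h2n hn2]
    have hcong : (((y + z : ZMod n).val : ℤ) : ZMod n)
        = (((y.val : ℤ) + (z.val : ℤ) : ℤ) : ZMod n) := by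
      rw [valcast n hn, Int.cast_add, valcast n hn, valcast n hn]
    rw [keycong2 n ω h2n ((x.val : ℤ)) ((x.val : ℤ)) _ ((y.val : ℤ) + (z.val : ℤ)) rfl hcong,
      ← zpow_add]
    congr 1
    ring

theorem conv (n : ℕ) (hn : 0 < n) (q : ZMod n → ℂˣ) (hq : IsQuadForm q) :
    (q 1) ^ (2 * n) = 1 ∧ (q 1) ^ (n ^ 2) = 1 ∧
      ∀ k : ℤ, q ((k : ZMod n)) = (q 1) ^ (k ^ 2) := by
  obtain ⟨hsq, hbl, hbr⟩ := hq
  have hk : ∀ k : ℤ, q ((k : ZMod n)) = (q 1) ^ (k ^ 2) := by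
    intro k
    have h1 : (k : ZMod n) = k • (1 : ZMod n) := by rw [zsmul_eq_mul, mul_one]
    rw [h1, hsq]
  have hq0 : q 0 = 1 := by
    have := hsq 0 0
    simpa using this
  have hn2 : (q 1) ^ (n ^ 2) = 1 := by
    have := hk n
    rw [Int.cast_natCast, ZMod.natCast_self, hq0] at this
    have h2 : ((n : ℤ) ^ 2) = ((n ^ 2 : ℕ) : ℤ) := by push_cast; ring
    rw [h2, zpow_natCast] at this
    exact this.symm
  have hp0 : polar q 1 0 = 1 := by
    have := hbr 1 0 0
    rw [add_zero] at this
    exact (mul_left_cancel (a := polar q 1 0) (by rw [mul_one, ← this])).symm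
  have hnsmul : ∀ m : ℕ, polar q 1 (m • (1 : ZMod n)) = (polar q 1 1) ^ m := by
    intro m
    induction m with
    | zero => simpa using hp0
    | succ m ih =>
        rw [succ_nsmul, hbr, ih, pow_succ]
  have hp11 : polar q 1 1 = (q 1) ^ 2 := by
    have h2 : (1 : ZMod n) + 1 = ((2 : ℤ) : ZMod n) := by push_cast; ring
    show q (1 + 1) * (q 1)⁻¹ * (q 1)⁻¹ = (q 1) ^ 2
    rw [h2, hk 2]
    have : ((2 : ℤ) ^ 2) = (4 : ℤ) := by norm_num
    rw [this]
    have h4 : (q 1) ^ (4 : ℤ) = (q 1) ^ (4 : ℕ) := zpow_natCast _ _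
    rw [h4]
    group
  have h2n : (q 1) ^ (2 * n) = 1 := by
    have := hnsmul n
    have hns : (n : ℕ) • (1 : ZMod n) = 0 := by
      rw [nsmul_eq_mul, mul_one, ZMod.natCast_self]
    rw [hns, hp0, hp11, ← pow_mul] at this
    exact this.symm
  exact ⟨h2n, hn2, hk⟩

/-- Every map `q(k) = ω^{k²}` with `ω^{2n} = 1` (and `ω^{n²} = 1`) is a
well-defined quadratic form on `ℤ/n`; conversely every quadratic form on
`ℤ/n` is of this form.  This gives a bijection between quadratic forms on
`ℤ/n` and `n`-th roots of unity for `n` odd, resp. `2n`-th roots of unity for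
`n` even. -/
theorem stmt_11 (n : ℕ) (hn : 0 < n) :
    -- well-definedness and quadraticity
    (∀ ω : ℂˣ, ω ^ (2 * n) = 1 → ω ^ (n ^ 2) = 1 →
      IsQuadForm (fun x : ZMod n => ω ^ (x.val ^ 2)) ∧
      ∀ k : ℤ, (fun x : ZMod n => ω ^ (x.val ^ 2)) ((k : ZMod n)) = ω ^ (k ^ 2)) ∧
    -- every quadratic form arises this way
    (∀ q : ZMod n → ℂˣ, IsQuadForm q →
      ∃ ω : ℂˣ, ω ^ (2 * n) = 1 ∧ ω ^ (n ^ 2) = 1 ∧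
        ∀ k : ℤ, q ((k : ZMod n)) = ω ^ (k ^ 2)) ∧
    -- the bijection with roots of unity
    ∃ e : {q : ZMod n → ℂˣ // IsQuadForm q} ≃
        {ω : ℂˣ // ω ^ (if Even n then 2 * n else n) = 1},
      ∀ q : {q : ZMod n → ℂˣ // IsQuadForm q}, ((e q : ℂˣ)) = q.val 1 := by
  refine ⟨?_, ?_, ?_⟩
  · intro ω h2n hn2
    exact ⟨fwdQuad n hn ω h2n hn2, fun k => L3 n hn ω h2n hn2 k⟩
  · intro q hq
    obtain ⟨h2n, hn2, hk⟩ := conv n hn q hq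
    exact ⟨q 1, h2n, hn2, hk⟩
  · -- the bijection
    have toroot : ∀ q : ZMod n → ℂˣ, IsQuadForm q →
        (q 1) ^ (if Even n then 2 * n else n) = 1 := by
      intro q hq
      obtain ⟨h2n, hn2, _⟩ := conv n hn q hq
      split_ifs with he
      · exact h2n
      · -- n odd
        obtain ⟨l, hl⟩ := Nat.not_even_iff_odd.mp he
        have key : ((n : ℕ) : ℤ) = ((n ^ 2 : ℕ) : ℤ) + ((2 * n : ℕ) : ℤ) * (-(l : ℤ)) := by
          subst hl; push_cast; ring
        have : (q 1) ^ ((n : ℕ) : ℤ) = 1 := by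
          rw [key, zpow_add, zpow_mul, zpow_natCast, zpow_natCast, hn2, h2n, one_zpow,
            one_mul]
        rwa [zpow_natCast] at this
    have fromroot : ∀ ω : ℂˣ, ω ^ (if Even n then 2 * n else n) = 1 →
        ω ^ (2 * n) = 1 ∧ ω ^ (n ^ 2) = 1 := by
      intro ω hω
      split_ifs at hω with he
      · obtain ⟨m, hm⟩ := he
        refine ⟨hω, ?_⟩
        have : n ^ 2 = (2 * n) * m := by rw [hm]; ring
        rw [this, pow_mul, hω, one_pow]
      · constructor
        · have : 2 * n = n * 2 := by ring
          rw [this, pow_mul, hω, one_pow]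
        · have : n ^ 2 = n * n := sq n
          rw [this, pow_mul, hω, one_pow]
    refine ⟨{
      toFun := fun q => ⟨q.val 1, toroot q.val q.prop⟩
      invFun := fun ω => ⟨fun x => (ω : ℂˣ) ^ (x.val ^ 2),
        fwdQuad n hn ω (fromroot ω ω.prop).1 (fromroot ω ω.prop).2⟩
      left_inv := ?_
      right_inv := ?_ }, fun q => rfl⟩
    · intro q
      apply Subtype.ext
      funext x
      obtain ⟨_, _, hk⟩ := conv n hn q.val q.prop
      show (q.val 1) ^ (x.val ^ 2) = q.val x
      have := hk ((x.val : ℤ))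
      rw [valcast n hn] at this
      rw [← zpow_natCast]
      push_cast
      exact this.symm
    · intro ω
      apply Subtype.ext
      show ω.val ^ ((1 : ZMod n).val ^ 2) = ω.val
      rcases eq_or_lt_of_le (show 1 ≤ n from hn) with h1 | h1
      · -- n = 1
        have hn1 : n = 1 := h1.symm
        subst hn1
        have hval : (1 : ZMod 1).val = 0 := by
          rw [show (1 : ZMod 1) = 0 from Subsingleton.elim _ _]
          rfl
        have hω : ω.val = 1 := by
          have h := ω.prop
          norm_num at h
          exact h
        rw [hval, hω]
        rfl
      · haveI : Fact (1 < n) := ⟨h1⟩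
        rw [ZMod.val_one, one_pow, pow_one]
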